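/- arXiv:1705.05346 — 2 statements merged into one kernel-verified Lean document; each statement's English description precedes it below -/
import Mathlib

section
/- Let N and k be positive integers with k < N, and let 0 < p < 1. Then there is no lower semicontinuous function u : ℝ^N → ℝ with u(x) > 0 for every x which is a viscosity supersolution of P⁻_k(D²u) + u^p = 0 in ℝ^N. -/
open scoped BigOperators

/-- The eigenvalues of a symmetric real matrix, listed in nondecreasing order with
multiplicity (junk value `0` if the matrix is not Hermitian). -/
noncomputable def sortedEig {n : ℕ} (A : Matrix (Fin n) (Fin n) ℝ) : Fin n → ℝ :=
  if h : A.IsHermitian then h.eigenvalues ∘ Tuple.sort h.eigenvalues else 0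

/-- `P⁻_k(A)`: the sum of the `k` smallest eigenvalues of `A`. -/
noncomputable def Pminus {n : ℕ} (k : ℕ) (A : Matrix (Fin n) (Fin n) ℝ) : ℝ :=
  ∑ i : Fin n, if (i : ℕ) < k then sortedEig A i else 0

/-- `P⁺_k(A)`: the sum of the `k` largest eigenvalues of `A`. -/
noncomputable def Pplus {n : ℕ} (k : ℕ) (A : Matrix (Fin n) (Fin n) ℝ) : ℝ :=
  ∑ i : Fin n, if n - k ≤ (i : ℕ) then sortedEig A i else 0

/-- The Hessian matrix `D²u(x)` of `u : ℝ^N → ℝ` at `x`. -/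
noncomputable def hessianMatrix {N : ℕ} (u : EuclideanSpace ℝ (Fin N) → ℝ)
    (x : EuclideanSpace ℝ (Fin N)) : Matrix (Fin N) (Fin N) ℝ :=
  fun i j => iteratedFDeriv ℝ 2 u x ![EuclideanSpace.single i 1, EuclideanSpace.single j 1]

/-- `u` is a viscosity supersolution of `F(D²u) + g(u) = 0` in `Ω`. -/
def IsViscositySupersolution {N : ℕ} (F : Matrix (Fin N) (Fin N) ℝ → ℝ) (g : ℝ → ℝ)
    (Ω : Set (EuclideanSpace ℝ (Fin N))) (u : EuclideanSpace ℝ (Fin N) → ℝ) : Prop :=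
  ∀ x₀ ∈ Ω, ∀ φ : EuclideanSpace ℝ (Fin N) → ℝ, ContDiff ℝ 2 φ →
    IsLocalMinOn (fun x => u x - φ x) Ω x₀ →
      F (hessianMatrix φ x₀) + g (u x₀) ≤ 0

/-- `u` is a viscosity subsolution of `F(D²u) + g(u) = 0` in `Ω`. -/
def IsViscositySubsolution {N : ℕ} (F : Matrix (Fin N) (Fin N) ℝ → ℝ) (g : ℝ → ℝ)
    (Ω : Set (EuclideanSpace ℝ (Fin N))) (u : EuclideanSpace ℝ (Fin N) → ℝ) : Prop :=
  ∀ x₀ ∈ Ω, ∀ φ : EuclideanSpace ℝ (Fin N) → ℝ, ContDiff ℝ 2 φ →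
    IsLocalMaxOn (fun x => u x - φ x) Ω x₀ →
      0 ≤ F (hessianMatrix φ x₀) + g (u x₀)

/-- `u` is a viscosity solution of `F(D²u) + g(u) = 0` in `Ω`. -/
def IsViscositySolution {N : ℕ} (F : Matrix (Fin N) (Fin N) ℝ → ℝ) (g : ℝ → ℝ)
    (Ω : Set (EuclideanSpace ℝ (Fin N))) (u : EuclideanSpace ℝ (Fin N) → ℝ) : Prop :=
  IsViscositySubsolution F g Ω u ∧ IsViscositySupersolution F g Ω u

section Aux

open scoped RealInnerProductSpace
open Matrix

/-- matrix of the form `β vvᵀ + c Id` -/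
noncomputable def Mform {n : ℕ} (β c : ℝ) (v : Fin n → ℝ) : Matrix (Fin n) (Fin n) ℝ :=
  Matrix.of fun i j => β * (v i * v j) + (if i = j then c else 0)

lemma Mform_isHermitian {n : ℕ} (β c : ℝ) (v : Fin n → ℝ) : (Mform β c v).IsHermitian := by
  ext i j
  simp only [Matrix.conjTranspose_apply, Mform, Matrix.of_apply, star_trivial]
  rcases eq_or_ne i j with h | h
  · subst h; ring
  · rw [if_neg h, if_neg (Ne.symm h)]; ring

lemma outer_psd {n : ℕ} {β : ℝ} (hβ : 0 ≤ β) (v : Fin n → ℝ) :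
    (Matrix.of fun i j => β * (v i * v j) : Matrix (Fin n) (Fin n) ℝ).PosSemidef := by
  rw [Matrix.posSemidef_iff_dotProduct_mulVec]
  constructor
  · ext i j
    simp only [Matrix.conjTranspose_apply, Matrix.of_apply, star_trivial]
    ring
  · intro x
    have hst : star x = x := by funext j; simp
    have h1 : ∀ i, (∑ j, (β * (v i * v j)) * x j) = β * v i * (∑ j, v j * x j) := by
      intro i
      rw [Finset.mul_sum]
      exact Finset.sum_congr rfl fun j _ => by ring
    have h2 : (star x) ⬝ᵥ ((Matrix.of fun i j => β * (v i * v j)) *ᵥ x)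
        = β * ((∑ j, v j * x j) * (∑ j, v j * x j)) := by
      rw [hst]
      simp only [Matrix.mulVec, dotProduct, Matrix.of_apply]
      calc (∑ i, x i * (∑ j, (β * (v i * v j)) * x j))
          = ∑ i, x i * (β * v i * (∑ j, v j * x j)) := by
            exact Finset.sum_congr rfl fun i _ => by rw [h1]
        _ = β * ((∑ i, v i * x i) * (∑ j, v j * x j)) := by
            rw [Finset.sum_mul, Finset.mul_sum]
            exact Finset.sum_congr rfl fun i _ => by ring
    rw [h2]
    exact mul_nonneg hβ (mul_self_nonneg _)

lemma Mform_sub_eq {n : ℕ} (β c : ℝ) (v : Fin n → ℝ) :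
    Mform β c v - c • (1 : Matrix (Fin n) (Fin n) ℝ)
      = (Matrix.of fun i j => β * (v i * v j)) := by
  ext i j
  simp only [Matrix.sub_apply, Matrix.smul_apply, Matrix.one_apply, Mform, Matrix.of_apply,
    smul_eq_mul]
  rcases eq_or_ne i j with h | h <;> simp [h]

lemma eigenvalues_ge {n : ℕ} {A : Matrix (Fin n) (Fin n) ℝ} (hA : A.IsHermitian) {c : ℝ}
    (h : (A - c • (1 : Matrix (Fin n) (Fin n) ℝ)).PosSemidef) (i : Fin n) :
    c ≤ hA.eigenvalues i := by
  have heq := hA.eigenvalues_eq i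
  set v : Fin n → ℝ := ⇑(hA.eigenvectorBasis i) with hvdef
  have h1 : ⟪(hA.eigenvectorBasis i : EuclideanSpace ℝ (Fin n)), hA.eigenvectorBasis i⟫
      = (1 : ℝ) := by
    rw [real_inner_self_eq_norm_mul_norm, hA.eigenvectorBasis.orthonormal.1 i]; norm_num
  have hdot : dotProduct (star v) v = 1 := by
    rw [← h1]
    simp [PiLp.inner_apply, dotProduct, hvdef]
    rw [PiLp.inner_apply] at h1
    simpa [sq] using h1
  have h2 := h.dotProduct_mulVec_nonneg v
  rw [Matrix.sub_mulVec, Matrix.smul_mulVec, Matrix.one_mulVec, dotProduct_sub,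
    dotProduct_smul, hdot] at h2
  simp only [smul_eq_mul, mul_one] at h2
  have heq' : hA.eigenvalues i = dotProduct (star v) (A *ᵥ v) := by
    simpa using heq
  linarith [heq' ▸ h2]

lemma sum_ite_lt (n k : ℕ) (hk : k ≤ n) (c : ℝ) :
    (∑ i : Fin n, if (i : ℕ) < k then c else 0) = (k : ℝ) * c := by
  rw [Fin.sum_univ_eq_sum_range (fun i => if i < k then c else 0) n]
  rw [Finset.sum_ite, Finset.sum_const, Finset.sum_const_zero, add_zero]
  have : (Finset.range n).filter (fun i => i < k) = Finset.range k := by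
    ext x; simp only [Finset.mem_filter, Finset.mem_range]; omega
  rw [this, Finset.card_range, nsmul_eq_mul]

lemma Pminus_Mform_ge {n : ℕ} (k : ℕ) (hk : k ≤ n) {β c : ℝ} (hβ : 0 ≤ β) (v : Fin n → ℝ) :
    (k : ℝ) * c ≤ Pminus k (Mform β c v) := by
  have hM : (Mform β c v).IsHermitian := Mform_isHermitian β c v
  have heig : ∀ i, c ≤ hM.eigenvalues i := by
    intro i
    refine eigenvalues_ge hM ?_ i
    rw [Mform_sub_eq]
    exact outer_psd hβ v
  have hsort : ∀ i, c ≤ sortedEig (Mform β c v) i := by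
    intro i
    simp only [sortedEig]
    rw [dif_pos hM]
    exact heig _
  rw [Pminus, ← sum_ite_lt n k hk c]
  refine Finset.sum_le_sum fun i _ => ?_
  by_cases h : (i : ℕ) < k
  · simpa [h] using hsort i
  · simp [h]


lemma lsc_min_on_compact {X : Type*} [TopologicalSpace X] {f : X → ℝ}
    (hf : LowerSemicontinuous f) {s : Set X} (hs : IsCompact s) (hne : s.Nonempty) :
    ∃ x₀ ∈ s, ∀ x ∈ s, f x₀ ≤ f x := by
  by_contra hcon
  push_neg at hcon
  have hcover : s ⊆ ⋃ y : s, f ⁻¹' Set.Ioi (f y.1) := by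
    intro x hx
    obtain ⟨y, hy, hlt⟩ := hcon x hx
    exact Set.mem_iUnion.2 ⟨⟨y, hy⟩, hlt⟩
  obtain ⟨t, ht⟩ := hs.elim_finite_subcover _ (fun y : s => hf.isOpen_preimage (f y.1)) hcover
  have htne : t.Nonempty := by
    obtain ⟨x, hx⟩ := hne
    obtain ⟨y, hy, -⟩ := Set.mem_iUnion₂.1 (ht hx)
    exact ⟨y, hy⟩
  obtain ⟨y₀, hy₀t, hy₀min⟩ := Finset.exists_min_image t (fun y => f y.1) htne
  obtain ⟨y₁, hy₁t, hy₁⟩ := Set.mem_iUnion₂.1 (ht y₀.2)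
  exact absurd (hy₀min y₁ hy₁t) (not_le.2 hy₁)

section Analysis

variable {N : ℕ}

local notation "E" => EuclideanSpace ℝ (Fin N)

noncomputable def innerSLR (N : ℕ) :
    EuclideanSpace ℝ (Fin N) →L[ℝ] EuclideanSpace ℝ (Fin N) →L[ℝ] ℝ := innerSL ℝ

lemma innerSLR_apply (x y : E) : innerSLR N x y = ⟪x, y⟫ := rfl

lemma hasFDerivAt_inner_sub (z x : E) :
    HasFDerivAt (fun y : E => ⟪y - z, y - z⟫) ((2 : ℝ) • innerSL ℝ (x - z)) x := by
  have h1 : HasFDerivAt (fun y : E => y - z) (ContinuousLinearMap.id ℝ E) x :=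
    (hasFDerivAt_id x).sub_const z
  have h2 := h1.inner ℝ h1
  refine h2.congr_fderiv ?_
  ext v
  simp only [ContinuousLinearMap.smul_apply, innerSL_apply_apply, ContinuousLinearMap.comp_apply,
    ContinuousLinearMap.prod_apply, ContinuousLinearMap.id_apply, fderivInnerCLM_apply,
    smul_eq_mul]
  rw [real_inner_comm v (x - z)]
  ring

lemma hessianMatrix_radial (z x₀ : E) (g g' g'' : ℝ → ℝ)
    (hg : ∀ t, HasDerivAt g (g' t) t) (hg' : ∀ t, HasDerivAt g' (g'' t) t) :
    hessianMatrix (fun x => g (⟪x - z, x - z⟫)) x₀ =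
      Mform (4 * g'' (⟪x₀ - z, x₀ - z⟫)) (2 * g' (⟪x₀ - z, x₀ - z⟫))
        (fun i => (x₀ - z) i) := by
  have hφ : ∀ y : E, HasFDerivAt (fun x : E => g (⟪x - z, x - z⟫))
      ((2 * g' (⟪y - z, y - z⟫)) • innerSL ℝ (y - z)) y := by
    intro y
    have h1 := (hg (⟪y - z, y - z⟫)).comp_hasFDerivAt y (hasFDerivAt_inner_sub z y)
    have h2 : g' (⟪y - z, y - z⟫) • ((2:ℝ) • innerSL ℝ (y - z))
        = (2 * g' (⟪y - z, y - z⟫)) • innerSL ℝ (y - z) := by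
      rw [smul_smul, mul_comm]
    rw [h2] at h1
    exact h1
  have hfd : fderiv ℝ (fun x : E => g (⟪x - z, x - z⟫))
      = fun y : E => (2 * g' (⟪y - z, y - z⟫)) • innerSL ℝ (y - z) :=
    funext fun y => (hφ y).fderiv
  have hT : HasFDerivAt (fun y : E => innerSL ℝ (y - z)) (innerSLR N) x₀ := by
    have h2 := (innerSLR N).hasFDerivAt.comp x₀ ((hasFDerivAt_id x₀).sub_const z)
    rw [ContinuousLinearMap.comp_id] at h2
    exact h2
  have hc : HasFDerivAt (fun y : E => 2 * g' (⟪y - z, y - z⟫))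
      ((4 * g'' (⟪x₀ - z, x₀ - z⟫)) • innerSL ℝ (x₀ - z)) x₀ := by
    have h1 := ((hg' (⟪x₀ - z, x₀ - z⟫)).const_mul (2:ℝ)).comp_hasFDerivAt x₀
      (hasFDerivAt_inner_sub z x₀)
    rw [smul_smul] at h1
    have h3 : 2 * g'' (⟪x₀ - z, x₀ - z⟫) * 2 = 4 * g'' (⟪x₀ - z, x₀ - z⟫) := by ring
    rw [h3] at h1
    exact h1
  have hGd : HasFDerivAt (fun y : E => (2 * g' (⟪y - z, y - z⟫)) • innerSL ℝ (y - z))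
      ((2 * g' (⟪x₀ - z, x₀ - z⟫)) • innerSLR N
        + (((4 * g'' (⟪x₀ - z, x₀ - z⟫)) • innerSL ℝ (x₀ - z)).smulRight
            (innerSL ℝ (x₀ - z)))) x₀ := hc.smul hT
  funext i j
  show iteratedFDeriv ℝ 2 (fun x : E => g (⟪x - z, x - z⟫)) x₀
      ![EuclideanSpace.single i 1, EuclideanSpace.single j 1] = _
  rw [iteratedFDeriv_two_apply, hfd, hGd.fderiv]
  simp only [Matrix.cons_val_zero, Matrix.cons_val_one, Matrix.head_cons,
    ContinuousLinearMap.add_apply, ContinuousLinearMap.smul_apply,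
    ContinuousLinearMap.smulRight_apply, innerSL_apply_apply, innerSLR_apply, smul_eq_mul,
    EuclideanSpace.inner_single_right, EuclideanSpace.inner_single_left,
    EuclideanSpace.single_apply, Mform, Matrix.of_apply, starRingEnd_apply, star_trivial,
    mul_one, one_mul]
  rcases eq_or_ne i j with h | h
  · subst h; simp; ring
  · simp only [if_neg (Ne.symm h), if_neg h, add_zero]
    ring

end Analysis



section Main

open scoped RealInnerProductSpace
open Matrix

set_option maxHeartbeats 1000000 in
theorem statement5 (N k : ℕ) (hk : 0 < k) (hkN : k < N) (p : ℝ) (hp0 : 0 < p) (hp1 : p < 1) :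
    ¬ ∃ u : EuclideanSpace ℝ (Fin N) → ℝ, LowerSemicontinuous u ∧ (∀ x, 0 < u x) ∧
      IsViscositySupersolution (Pminus k) (fun t => t ^ p) Set.univ u := by
  rintro ⟨u, hlsc, hpos, hsup⟩
  -- choice of the exponent α
  obtain ⟨n, hn⟩ := exists_nat_ge (1 / (1 - p))
  set α : ℕ := 2 * n + 3 with hαdef
  have hodd : Odd α := ⟨n + 1, by omega⟩
  have h1p : (0:ℝ) < 1 - p := by linarith
  have hα1 : (1:ℝ) ≤ (α:ℝ) := by
    have : (1:ℕ) ≤ α := by omega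
    exact_mod_cast this
  have hαge : 1 / (1 - p) ≤ (α : ℝ) := by
    refine hn.trans ?_
    have : (n:ℝ) ≤ ((2 * n + 3 : ℕ) : ℝ) := by push_cast; linarith
    exact this
  have hαp : (α:ℝ) * p ≤ (α:ℝ) - 1 := by
    rw [div_le_iff₀ h1p] at hαge
    have hexp : (α:ℝ) * (1 - p) = (α:ℝ) - (α:ℝ) * p := by ring
    linarith
  have hk0 : (0:ℝ) < (k:ℝ) := by exact_mod_cast hk
  set C : ℝ := 2 * (k:ℝ) * (α:ℝ) with hCdef
  have hCpos : 0 < C := by positivity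
  have hC1pos : 0 < C + 1 := by linarith
  obtain ⟨δ, hδpos, hδpow⟩ : ∃ δ : ℝ, 0 < δ ∧ δ ^ (1-p) = (C+1)⁻¹ :=
    ⟨((C+1)⁻¹) ^ ((1-p)⁻¹), Real.rpow_pos_of_pos (by positivity) _, by
      rw [← Real.rpow_mul (by positivity), inv_mul_cancel₀ (by linarith : (1:ℝ) - p ≠ 0),
        Real.rpow_one]⟩
  -- Step 1 : find a point z where u is at most δ
  obtain ⟨a, hapos, ha2⟩ : ∃ a : ℝ, 0 < a ∧ 2 * (k:ℝ) * a = δ ^ p / 2 := by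
    refine ⟨δ ^ p / (4 * (k:ℝ)), by positivity, ?_⟩
    have hk0' : (k:ℝ) ≠ 0 := ne_of_gt hk0
    field_simp
    ring
  have hGlsc : LowerSemicontinuous (fun x : EuclideanSpace ℝ (Fin N) =>
      u x + a * ⟪x - 0, x - 0⟫) := by
    refine LowerSemicontinuous.add hlsc ?_
    exact (continuous_const.mul ((continuous_id.sub continuous_const).inner
      (continuous_id.sub continuous_const))).lowerSemicontinuous
  obtain ⟨R, hRpos, hsq⟩ : ∃ R : ℝ, 0 < R ∧ u 0 / a ≤ R ^ 2 := by
    refine ⟨Real.sqrt (u 0 / a) + 1, by positivity, ?_⟩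
    have h1 : Real.sqrt (u 0 / a) ^ 2 = u 0 / a :=
      Real.sq_sqrt (div_nonneg (hpos 0).le hapos.le)
    have h2 : 0 ≤ Real.sqrt (u 0 / a) := Real.sqrt_nonneg _
    nlinarith
  obtain ⟨z, hzmem, hzmin⟩ := lsc_min_on_compact hGlsc
    (isCompact_closedBall (0 : EuclideanSpace ℝ (Fin N)) R)
    ⟨0, Metric.mem_closedBall_self hRpos.le⟩
  have hinner0 : ⟪(0:EuclideanSpace ℝ (Fin N)) - 0, (0:EuclideanSpace ℝ (Fin N)) - 0⟫
      = (0:ℝ) := by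
    simp
  have hglobal : ∀ x : EuclideanSpace ℝ (Fin N),
      u z + a * ⟪z - 0, z - 0⟫ ≤ u x + a * ⟪x - 0, x - 0⟫ := by
    intro x
    by_cases hx : x ∈ Metric.closedBall (0:EuclideanSpace ℝ (Fin N)) R
    · exact hzmin x hx
    · have h0 : u z + a * ⟪z - 0, z - 0⟫ ≤ u 0 + a * ⟪(0:EuclideanSpace ℝ (Fin N)) - 0, 0 - 0⟫ :=
        hzmin 0 (Metric.mem_closedBall_self hRpos.le)
      rw [hinner0, mul_zero, add_zero] at h0
      have hxR : R < ‖x‖ := by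
        simp only [Metric.mem_closedBall, dist_zero_right] at hx
        linarith [not_le.1 hx]
      have hxin : ⟪x - 0, x - 0⟫ = ‖x‖ ^ 2 := by
        rw [sub_zero, real_inner_self_eq_norm_sq]
      have hu0 : u 0 ≤ a * R ^ 2 := by
        rw [div_le_iff₀ hapos] at hsq
        linarith [hsq]
      have hx2 : R ^ 2 ≤ ‖x‖ ^ 2 := by
        have := pow_le_pow_left₀ hRpos.le hxR.le 2
        linarith
      have : a * R ^ 2 ≤ a * ‖x‖ ^ 2 := mul_le_mul_of_nonneg_left hx2 hapos.le
      have := hpos x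
      rw [hxin]
      linarith
  -- apply the supersolution property with the concave paraboloid
  have hg₁ : ∀ t : ℝ, HasDerivAt (fun t : ℝ => -(a * t)) (-a) t := by
    intro t
    have := ((hasDerivAt_id t).const_mul a).neg
    exact this.congr_deriv (by ring)
  have hg₁' : ∀ t : ℝ, HasDerivAt (fun _ : ℝ => -a) ((fun _ : ℝ => (0:ℝ)) t) t :=
    fun t => hasDerivAt_const t (-a)
  have hφ₁cd : ContDiff ℝ 2 (fun x : EuclideanSpace ℝ (Fin N) => -(a * ⟪x - 0, x - 0⟫)) := by
    exact (contDiff_const.mul (ContDiff.inner ℝ (contDiff_id.sub contDiff_const)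
      (contDiff_id.sub contDiff_const))).neg
  have hmin₁ : IsLocalMinOn
      (fun x : EuclideanSpace ℝ (Fin N) => u x - (-(a * ⟪x - 0, x - 0⟫))) Set.univ z := by
    refine Filter.Eventually.of_forall fun x => ?_
    have := hglobal x
    simp only [sub_neg_eq_add]
    linarith
  have happ₁ : Pminus k (hessianMatrix
        (fun x : EuclideanSpace ℝ (Fin N) => -(a * ⟪x - 0, x - 0⟫)) z) + (u z) ^ p ≤ 0 :=
    hsup z (Set.mem_univ z) _ hφ₁cd hmin₁
  rw [hessianMatrix_radial (0:EuclideanSpace ℝ (Fin N)) z (fun t => -(a * t)) (fun _ => -a)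
    (fun _ => (0:ℝ)) hg₁ hg₁'] at happ₁
  have hPm₁ : ((k:ℝ)) * (2 * -a) ≤ Pminus k (Mform (4 * (0:ℝ)) (2 * -a)
      (fun i => (z - 0) i)) :=
    Pminus_Mform_ge k hkN.le (by norm_num) _
  have hz1 : (u z) ^ p ≤ 2 * (k:ℝ) * a := by
    calc (u z) ^ p ≤ -(((k:ℝ)) * (2 * -a)) := by linarith [happ₁, hPm₁]
      _ = 2 * (k:ℝ) * a := by ring
  have hzδ : u z ≤ δ := by
    by_contra hcon
    push_neg at hcon
    have h1 : δ ^ p < (u z) ^ p := Real.rpow_lt_rpow hδpos.le hcon hp0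
    rw [ha2] at hz1
    have := Real.rpow_pos_of_pos hδpos p
    linarith
  -- Step 2 : sliding the compactly supported profile under u
  set S : Set ℝ := {θ : ℝ | 0 ≤ θ ∧ ∀ x : EuclideanSpace ℝ (Fin N),
      θ * (1 - ⟪x - z, x - z⟫) ^ α ≤ u x} with hSdef
  have h0S : (0:ℝ) ∈ S := ⟨le_refl 0, fun x => by rw [zero_mul]; exact (hpos x).le⟩
  have hwz : ((1:ℝ) - ⟪z - z, z - z⟫) ^ α = 1 := by simp
  have hSbdd : BddAbove S := by
    refine ⟨u z, fun θ hθ => ?_⟩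
    have := hθ.2 z
    rwa [hwz, mul_one] at this
  have hSclosed : IsClosed S := by
    have : S = Set.Ici (0:ℝ) ∩ ⋂ x : EuclideanSpace ℝ (Fin N),
        {θ : ℝ | θ * (1 - ⟪x - z, x - z⟫) ^ α ≤ u x} := by
      ext θ
      simp only [hSdef, Set.mem_setOf_eq, Set.mem_inter_iff, Set.mem_Ici, Set.mem_iInter]
    rw [this]
    exact isClosed_Ici.inter (isClosed_iInter fun x =>
      isClosed_le (continuous_id.mul continuous_const) continuous_const)
  set θs : ℝ := sSup S with hθdef
  have hθS : θs ∈ S := hSclosed.csSup_mem ⟨0, h0S⟩ hSbdd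
  have hθ0 : 0 ≤ θs := hθS.1
  have hθδ : θs ≤ δ := by
    have := hθS.2 z
    rw [hwz, mul_one] at this
    linarith [hzδ]
  -- bounds for the profile
  have hwle1 : ∀ x : EuclideanSpace ℝ (Fin N), (1 - ⟪x - z, x - z⟫) ^ α ≤ 1 := by
    intro x
    have hq1 : 1 - ⟪x - z, x - z⟫ ≤ 1 := by
      have := real_inner_self_nonneg (x := x - z)
      linarith
    rcases le_or_gt 0 (1 - ⟪x - z, x - z⟫) with h | h
    · exact pow_le_one₀ h hq1
    · exact (hodd.pow_nonpos h.le).trans zero_le_one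
  have hwout : ∀ x : EuclideanSpace ℝ (Fin N), x ∉ Metric.closedBall z 1 →
      (1 - ⟪x - z, x - z⟫) ^ α ≤ 0 := by
    intro x hx
    refine hodd.pow_nonpos ?_
    have hxz : 1 < ‖x - z‖ := by
      simp only [Metric.mem_closedBall, dist_eq_norm] at hx
      linarith [not_le.1 hx]
    have : ⟪x - z, x - z⟫ = ‖x - z‖ ^ 2 := real_inner_self_eq_norm_sq _
    nlinarith
  -- existence of a touching point
  have htouch : ∃ x₀ : EuclideanSpace ℝ (Fin N), u x₀ = θs * (1 - ⟪x₀ - z, x₀ - z⟫) ^ α := by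
    by_contra hno
    push_neg at hno
    have hstrict : ∀ x, 0 < u x - θs * (1 - ⟪x - z, x - z⟫) ^ α := by
      intro x
      have h1 := hθS.2 x
      rcases lt_or_eq_of_le h1 with h | h
      · linarith
      · exact absurd h.symm (hno x)
    have hflsc : LowerSemicontinuous (fun x : EuclideanSpace ℝ (Fin N) =>
        u x + -(θs * (1 - ⟪x - z, x - z⟫) ^ α)) := by
      refine LowerSemicontinuous.add hlsc ?_
      refine Continuous.lowerSemicontinuous ?_
      exact (continuous_const.mul ((continuous_const.sub ((continuous_id.sub
        continuous_const).inner (continuous_id.sub continuous_const))).pow α)).neg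
    obtain ⟨x₂, hx₂K, hx₂min⟩ := lsc_min_on_compact hflsc (isCompact_closedBall z 1)
      ⟨z, Metric.mem_closedBall_self zero_le_one⟩
    set η : ℝ := u x₂ + -(θs * (1 - ⟪x₂ - z, x₂ - z⟫) ^ α) with hηdef
    have hηpos : 0 < η := by
      have := hstrict x₂
      rw [hηdef]
      linarith
    set ε : ℝ := min η 1 with hεdef
    have hε0 : 0 < ε := lt_min hηpos one_pos
    have hεη : ε ≤ η := min_le_left _ _
    have hmem : θs + ε ∈ S := by
      constructor
      · linarith
      · intro x
        by_cases hx : x ∈ Metric.closedBall z 1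
        · have h1 := hx₂min x hx
          have h2 : ε * (1 - ⟪x - z, x - z⟫) ^ α ≤ ε :=
            mul_le_of_le_one_right hε0.le (hwle1 x)
          have h3 := hθS.2 x
          have h4 : (θs + ε) * (1 - ⟪x - z, x - z⟫) ^ α
              = θs * (1 - ⟪x - z, x - z⟫) ^ α + ε * (1 - ⟪x - z, x - z⟫) ^ α := by ring
          rw [h4]
          linarith
        · have h3 := hwout x hx
          have h5 : (θs + ε) * (1 - ⟪x - z, x - z⟫) ^ α ≤ 0 :=
            mul_nonpos_iff.2 (Or.inl ⟨by linarith, h3⟩)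
          linarith [hpos x]
    have := le_csSup hSbdd hmem
    linarith
  obtain ⟨x₀, hx₀⟩ := htouch
  have hθpos : 0 < θs := by
    rcases hθ0.lt_or_eq with h | h
    · exact h
    · rw [← h, zero_mul] at hx₀
      exact absurd hx₀ (ne_of_gt (hpos x₀))
  have hwx₀pos : 0 < (1 - ⟪x₀ - z, x₀ - z⟫) ^ α := by
    have h1 : 0 < θs * (1 - ⟪x₀ - z, x₀ - z⟫) ^ α := hx₀ ▸ hpos x₀
    rcases mul_pos_iff.1 h1 with ⟨-, h⟩ | ⟨h', -⟩
    · exact h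
    · linarith
  have hqpos : 0 < 1 - ⟪x₀ - z, x₀ - z⟫ := hodd.pow_pos_iff.1 hwx₀pos
  have hq1 : 1 - ⟪x₀ - z, x₀ - z⟫ ≤ 1 := by
    have := real_inner_self_nonneg (x := x₀ - z)
    linarith
  -- the second test function
  have hα2 : 1 ≤ α - 1 := by omega
  have hcast1 : ((α - 1 : ℕ) : ℝ) = (α:ℝ) - 1 := by
    rw [Nat.cast_sub (by omega : 1 ≤ α)]; norm_num
  have hcast2 : ((α - 2 : ℕ) : ℝ) = (α:ℝ) - 2 := by
    rw [Nat.cast_sub (by omega : 2 ≤ α)]; norm_num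
  have hg₂ : ∀ t : ℝ, HasDerivAt (fun t : ℝ => θs * (1 - t) ^ α)
      ((fun t : ℝ => -(θs * (α:ℝ)) * (1 - t) ^ (α - 1)) t) t := by
    intro t
    have h1 : HasDerivAt (fun t : ℝ => 1 - t) (-1) t := (hasDerivAt_id t).const_sub 1
    have h2 := (h1.pow α).const_mul θs
    refine h2.congr_deriv ?_
    beta_reduce
    ring
  have hg₂' : ∀ t : ℝ, HasDerivAt (fun t : ℝ => -(θs * (α:ℝ)) * (1 - t) ^ (α - 1))
      ((fun t : ℝ => (θs * (α:ℝ) * ((α:ℝ) - 1)) * (1 - t) ^ (α - 2)) t) t := by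
    intro t
    have h1 : HasDerivAt (fun t : ℝ => 1 - t) (-1) t := (hasDerivAt_id t).const_sub 1
    have h2 := (h1.pow (α - 1)).const_mul (-(θs * (α:ℝ)))
    have h3 : α - 1 - 1 = α - 2 := by omega
    rw [h3, hcast1] at h2
    refine h2.congr_deriv ?_
    beta_reduce
    ring
  have hφ₂cd : ContDiff ℝ 2 (fun x : EuclideanSpace ℝ (Fin N) =>
      θs * (1 - ⟪x - z, x - z⟫) ^ α) := by
    exact contDiff_const.mul ((contDiff_const.sub (ContDiff.inner ℝ
      (contDiff_id.sub contDiff_const) (contDiff_id.sub contDiff_const))).pow α)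
  have hmin₂ : IsLocalMinOn (fun x : EuclideanSpace ℝ (Fin N) =>
      u x - θs * (1 - ⟪x - z, x - z⟫) ^ α) Set.univ x₀ := by
    refine Filter.Eventually.of_forall fun x => ?_
    have h1 := hθS.2 x
    have h2 : u x₀ - θs * (1 - ⟪x₀ - z, x₀ - z⟫) ^ α = 0 := by rw [hx₀]; ring
    simp only [h2]
    linarith
  have happ₂ : Pminus k (hessianMatrix (fun x : EuclideanSpace ℝ (Fin N) =>
      θs * (1 - ⟪x - z, x - z⟫) ^ α) x₀) + (u x₀) ^ p ≤ 0 :=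
    hsup x₀ (Set.mem_univ x₀) _ hφ₂cd hmin₂
  rw [hessianMatrix_radial z x₀ (fun t => θs * (1 - t) ^ α)
    (fun t => -(θs * (α:ℝ)) * (1 - t) ^ (α - 1))
    (fun t => (θs * (α:ℝ) * ((α:ℝ) - 1)) * (1 - t) ^ (α - 2)) hg₂ hg₂'] at happ₂
  have hβ : (0:ℝ) ≤ 4 * ((θs * (α:ℝ) * ((α:ℝ) - 1)) * (1 - ⟪x₀ - z, x₀ - z⟫) ^ (α - 2)) := by
    have h1 : (0:ℝ) ≤ (1 - ⟪x₀ - z, x₀ - z⟫) ^ (α - 2) := pow_nonneg hqpos.le _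
    have h2 : (0:ℝ) ≤ (α:ℝ) - 1 := by linarith
    have h3 : (0:ℝ) ≤ (α:ℝ) := by linarith
    positivity
  have hPm₂ : ((k:ℝ)) * (2 * (-(θs * (α:ℝ)) * (1 - ⟪x₀ - z, x₀ - z⟫) ^ (α - 1)))
      ≤ Pminus k (Mform
        (4 * ((θs * (α:ℝ) * ((α:ℝ) - 1)) * (1 - ⟪x₀ - z, x₀ - z⟫) ^ (α - 2)))
        (2 * (-(θs * (α:ℝ)) * (1 - ⟪x₀ - z, x₀ - z⟫) ^ (α - 1)))
        (fun i => (x₀ - z) i)) :=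
    Pminus_Mform_ge k hkN.le hβ _
  have hkey : (u x₀) ^ p ≤ C * θs * (1 - ⟪x₀ - z, x₀ - z⟫) ^ (α - 1) := by
    calc (u x₀) ^ p
        ≤ -(((k:ℝ)) * (2 * (-(θs * (α:ℝ)) * (1 - ⟪x₀ - z, x₀ - z⟫) ^ (α - 1)))) := by
          linarith [happ₂, hPm₂]
      _ = C * θs * (1 - ⟪x₀ - z, x₀ - z⟫) ^ (α - 1) := by rw [hCdef]; ring
  -- rpow manipulations
  set q₀ : ℝ := 1 - ⟪x₀ - z, x₀ - z⟫ with hq₀def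
  have h1 : (u x₀) ^ p = θs ^ p * (q₀ ^ α) ^ p := by
    rw [hx₀, Real.mul_rpow hθpos.le (pow_nonneg hqpos.le α)]
  have h2 : (q₀ ^ α) ^ p = q₀ ^ ((α:ℝ) * p) := by
    rw [← Real.rpow_natCast q₀ α, ← Real.rpow_mul hqpos.le]
  have h3 : q₀ ^ ((α:ℝ) - 1) ≤ q₀ ^ ((α:ℝ) * p) :=
    Real.rpow_le_rpow_of_exponent_ge hqpos hq1 hαp
  have h4 : q₀ ^ ((α:ℝ) - 1) = q₀ ^ (α - 1 : ℕ) := by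
    rw [← hcast1, Real.rpow_natCast]
  have hqpow : 0 < q₀ ^ (α - 1 : ℕ) := pow_pos hqpos _
  have h5 : θs ^ p * q₀ ^ (α - 1 : ℕ) ≤ (C * θs) * q₀ ^ (α - 1 : ℕ) := by
    have h6 : θs ^ p * q₀ ^ (α - 1 : ℕ) ≤ (u x₀) ^ p := by
      rw [h1, h2]
      refine mul_le_mul_of_nonneg_left ?_ (Real.rpow_nonneg hθpos.le p)
      rw [← h4]
      exact h3
    calc θs ^ p * q₀ ^ (α - 1 : ℕ) ≤ (u x₀) ^ p := h6
      _ ≤ C * θs * q₀ ^ (α - 1 : ℕ) := hkey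
  have h6 : θs ^ p ≤ C * θs := le_of_mul_le_mul_right h5 hqpow
  have h7 : θs ^ (1 - p) ≤ (C + 1)⁻¹ := by
    have := Real.rpow_le_rpow hθ0 hθδ (by linarith : (0:ℝ) ≤ 1 - p)
    rwa [hδpow] at this
  have h8 : θs = θs ^ p * θs ^ (1 - p) := by
    rw [← Real.rpow_add hθpos]
    norm_num
  have h9 : θs ≤ (C * θs) * (C + 1)⁻¹ := by
    calc θs = θs ^ p * θs ^ (1 - p) := h8
      _ ≤ (C * θs) * (C + 1)⁻¹ :=
        mul_le_mul h6 h7 (Real.rpow_nonneg hθ0 _) (by positivity)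
  have h10 : θs * (C + 1) ≤ C * θs := by
    have h11 := mul_le_mul_of_nonneg_right h9 hC1pos.le
    rwa [mul_assoc, inv_mul_cancel₀ (ne_of_gt hC1pos), mul_one] at h11
  have hfin : θs * (C + 1) = C * θs + θs := by ring
  linarith

end Main

end Aux
end

section
/- Let N and k be positive integers with 2 < k < N, and let p > k/(k−2). For every μ > 0 and every β with 1/(p−1) ≤ β < (k−2)/2, setting C = μ^{β − 1/(p−1)} · (2β(k−2−2β))^{1/(p−1)}, the function u(x) = C·(μ + |x|²)^{−β} is a C² function on ℝ^N which is positive everywhere and satisfies P⁺_k(D²u(x)) + u(x)^p ≤ 0 for every x ∈ ℝ^N; that is, u is a positive classical supersolution of P⁺_k(D²u) + u^p = 0 in ℝ^N. -/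
open scoped BigOperators

section AuxLemmas
open Matrix
/- ### Auxiliary lemmas -/

lemma trace_eq_sum_eig {n : ℕ} {A : Matrix (Fin n) (Fin n) ℝ} (hA : A.IsHermitian) :
    A.trace = ∑ i, hA.eigenvalues i := by
  rw [hA.trace_eq_sum_eigenvalues]
  simp

lemma eig_lower {n : ℕ} {A : Matrix (Fin n) (Fin n) ℝ} (hA : A.IsHermitian)
    (a b : ℝ) (hb : 0 ≤ b) (x : Fin n → ℝ)
    (hAeq : ∀ i j, A i j = (a * if i = j then 1 else 0) + b * (x i * x j)) (i : Fin n) :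
    a ≤ hA.eigenvalues i := by
  set v : Fin n → ℝ := ⇑(hA.eigenvectorBasis i) with hv
  have hvne : v ≠ 0 := by
    intro h
    exact hA.eigenvectorBasis.orthonormal.ne_zero i (by ext j; exact congrFun h j)
  have hs : 0 < ∑ j, v j * v j := by
    rcases Function.ne_iff.1 hvne with ⟨j, hj⟩
    exact Finset.sum_pos' (fun j _ => mul_self_nonneg _)
      ⟨j, Finset.mem_univ j, mul_self_pos.2 hj⟩
  have heig := hA.mulVec_eigenvectorBasis i
  rw [← hv] at heig
  have hdot : v ⬝ᵥ (A *ᵥ v) = hA.eigenvalues i * ∑ j, v j * v j := by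
    rw [heig]
    simp [dotProduct, Finset.mul_sum]
    exact Finset.sum_congr rfl fun j _ => by ring
  have hdot2 : v ⬝ᵥ (A *ᵥ v) = (∑ j, a * (v j * v j)) + b * (∑ j, x j * v j) ^ 2 := by
    simp only [dotProduct, Matrix.mulVec, dotProduct, hAeq, Finset.mul_sum]
    have h1 : ∀ j : Fin n, ∑ l : Fin n,
        v j * (((a * if j = l then 1 else 0) + b * (x j * x l)) * v l)
        = a * (v j * v j) + (b * (x j * v j)) * ∑ l, (x l * v l) := by
      intro j
      have : ∀ l : Fin n, v j * (((a * if j = l then 1 else 0) + b * (x j * x l)) * v l)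
          = (if l = j then a * (v j * v j) else 0) + (b * (x j * v j)) * (x l * v l) := by
        intro l; by_cases h : j = l <;> simp [h, eq_comm] <;> ring
      simp only [this, Finset.sum_add_distrib, Finset.sum_ite_eq', Finset.mem_univ, if_true,
        ← Finset.mul_sum]
    calc ∑ j : Fin n, ∑ l : Fin n,
          v j * (((a * if j = l then 1 else 0) + b * (x j * x l)) * v l)
        = ∑ j : Fin n, (a * (v j * v j) + (b * (x j * v j)) * ∑ l, (x l * v l)) :=
          Finset.sum_congr rfl fun j _ => h1 j
      _ = ∑ j : Fin n, a * (v j * v j) + b * (∑ j, x j * v j) ^ 2 := by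
          rw [Finset.sum_add_distrib,
            show ∑ j : Fin n, (b * (x j * v j)) * ∑ l, x l * v l
              = b * (∑ j, x j * v j) ^ 2 by
              rw [← Finset.sum_mul, ← Finset.mul_sum, sq]; ring]
  rw [← Finset.mul_sum] at hdot2
  nlinarith [mul_nonneg hb (sq_nonneg (∑ j, x j * v j))]

lemma pplus_le {n k : ℕ} (hk : k ≤ n) {A : Matrix (Fin n) (Fin n) ℝ} (a b : ℝ) (hb : 0 ≤ b)
    (x : Fin n → ℝ) (hAeq : ∀ i j, A i j = (a * if i = j then 1 else 0) + b * (x i * x j)) :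
    Pplus k A ≤ k * a + b * ∑ i, x i * x i := by
  have hA : A.IsHermitian := by
    ext i j
    simp only [Matrix.conjTranspose_apply, hAeq, star_trivial]
    by_cases h : i = j
    · simp [h]
    · rw [if_neg h, if_neg fun h' => h h'.symm]; ring
  have hse : sortedEig A = hA.eigenvalues ∘ Tuple.sort hA.eigenvalues := by
    rw [sortedEig, dif_pos hA]
  have hlow : ∀ i, a ≤ sortedEig A i := by
    intro i; rw [hse]; exact eig_lower hA a b hb x hAeq _
  have htot : ∑ i, sortedEig A i = n * a + b * ∑ i, x i * x i := by
    rw [hse]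
    rw [show ∑ i, (hA.eigenvalues ∘ Tuple.sort hA.eigenvalues) i = ∑ i, hA.eigenvalues i from
      Equiv.sum_comp (Tuple.sort hA.eigenvalues) hA.eigenvalues]
    rw [← trace_eq_sum_eig hA]
    simp only [Matrix.trace, Matrix.diag, hAeq, if_pos rfl, mul_one, Finset.sum_add_distrib,
      Finset.sum_const, Finset.card_univ, Fintype.card_fin, ← Finset.mul_sum]
    push_cast; ring
  have hsplit : Pplus k A = (∑ i, sortedEig A i) - ∑ i : Fin n,
      (if (i : ℕ) < n - k then sortedEig A i else 0) := by
    rw [Pplus, ← Finset.sum_sub_distrib]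
    refine Finset.sum_congr rfl fun i _ => ?_
    by_cases h : n - k ≤ (i : ℕ)
    · rw [if_pos h, if_neg (by omega)]; ring
    · rw [if_neg h, if_pos (by omega)]; ring
  have hcnt : ∑ i : Fin n, (if (i : ℕ) < n - k then a else 0) = (n - k : ℕ) * a := by
    rw [Fin.sum_univ_eq_sum_range (fun i => if i < n - k then a else 0) n,
      Finset.sum_ite, Finset.sum_const, Finset.sum_const, smul_zero, add_zero,
      show (Finset.range n).filter (fun i => i < n - k) = Finset.range (n - k) by
        ext i; simp; omega,
      Finset.card_range, nsmul_eq_mul]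
  have hlb : (n - k : ℕ) * a ≤ ∑ i : Fin n, (if (i : ℕ) < n - k then sortedEig A i else 0) := by
    rw [← hcnt]
    refine Finset.sum_le_sum fun i _ => ?_
    by_cases h : (i : ℕ) < n - k
    · simpa [h] using hlow i
    · simp [h]
  rw [hsplit, htot]
  have : ((n - k : ℕ) : ℝ) = (n : ℝ) - k := by
    push_cast [Nat.cast_sub hk]; ring
  rw [this] at hlb
  nlinarith

lemma deriv_aux {N : ℕ} (μ : ℝ) (K e : ℝ) (y : EuclideanSpace ℝ (Fin N)) (hμ : 0 < μ) :
    HasFDerivAt (fun z : EuclideanSpace ℝ (Fin N) => K * (μ + ‖z‖ ^ 2) ^ e)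
      ((K * e * (μ + ‖y‖ ^ 2) ^ (e - 1) * 2) • innerSL ℝ y) y := by
  have hq : (0:ℝ) < μ + ‖y‖ ^ 2 := by positivity
  have h1 : HasFDerivAt (fun z : EuclideanSpace ℝ (Fin N) => ‖z‖ ^ 2)
      (2 • innerSL ℝ y) y := by
    simpa using (hasFDerivAt_id y).norm_sq
  have h2 : HasFDerivAt (fun z : EuclideanSpace ℝ (Fin N) => μ + ‖z‖ ^ 2)
      (2 • innerSL ℝ y) y := h1.const_add μ
  have h3 : HasDerivAt (fun t : ℝ => t ^ e) (e * (μ + ‖y‖ ^ 2) ^ (e - 1)) (μ + ‖y‖ ^ 2) :=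
    Real.hasDerivAt_rpow_const (Or.inl hq.ne')
  have h4 := (h3.comp_hasFDerivAt y h2).const_mul K
  refine h4.congr_fderiv ?_
  ext z
  simp [ContinuousLinearMap.smul_apply, two_smul]
  ring

lemma contdiff_u {N : ℕ} (C β μ : ℝ) (hμ : 0 < μ) :
    ContDiff ℝ 2 (fun y : EuclideanSpace ℝ (Fin N) => C * (μ + ‖y‖ ^ 2) ^ (-β)) := by
  rw [contDiff_iff_contDiffAt]
  intro y
  have hq : (0:ℝ) < μ + ‖y‖ ^ 2 := by positivity
  have h1 : ContDiffAt ℝ 2 (fun z : EuclideanSpace ℝ (Fin N) => (μ + ‖z‖ ^ 2) ^ (-β)) y :=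
    ((contDiff_const.add (contDiff_norm_sq ℝ)).contDiffAt).rpow_const_of_ne hq.ne'
  exact contDiffAt_const.mul h1

lemma hessian_entry {N : ℕ} (C β μ : ℝ) (hμ : 0 < μ) (x : EuclideanSpace ℝ (Fin N)) (i j : Fin N) :
    hessianMatrix (fun y => C * (μ + ‖y‖ ^ 2) ^ (-β)) x i j =
      ((C * (-β) * (μ + ‖x‖ ^ 2) ^ (-β - 1) * 2) * if i = j then 1 else 0)
      + ((C * (-β) * (-β - 1) * (μ + ‖x‖ ^ 2) ^ (-β - 1 - 1) * 4) * (x i * x j)) := by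
  set u : EuclideanSpace ℝ (Fin N) → ℝ := fun y => C * (μ + ‖y‖ ^ 2) ^ (-β) with hu
  set c : EuclideanSpace ℝ (Fin N) → ℝ :=
    fun y => C * (-β) * (μ + ‖y‖ ^ 2) ^ (-β - 1) * 2 with hcdef
  have hfd : fderiv ℝ u = fun y => (c y) • innerSL ℝ y :=
    funext fun y => ((deriv_aux μ C (-β) y hμ)).fderiv
  have hdiff : DifferentiableAt ℝ (fderiv ℝ u) x :=
    (((contdiff_u C β μ hμ).fderiv_right (m := 1) le_rfl).differentiable one_ne_zero) x
  have hA : hessianMatrix u x i j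
      = fderiv ℝ (fun y => (fderiv ℝ u y) (EuclideanSpace.single j 1)) x
          (EuclideanSpace.single i 1) := by
    rw [hessianMatrix, iteratedFDeriv_two_apply,
      fderiv_clm_apply hdiff (differentiableAt_const _)]
    simp [Matrix.cons_val_zero, Matrix.cons_val_one]
  have hB : (fun y => (fderiv ℝ u y) (EuclideanSpace.single j 1))
      = fun y => c y * y j := by
    funext y
    rw [hfd]
    simp [EuclideanSpace.inner_single_right, real_inner_comm]
  have hc' : HasFDerivAt c
      (((C * (-β) * 2) * (-β - 1) * (μ + ‖x‖ ^ 2) ^ (-β - 1 - 1) * 2) • innerSL ℝ x) x := by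
    have h := deriv_aux μ (C * (-β) * 2) (-β - 1) x hμ
    have he : c = fun z : EuclideanSpace ℝ (Fin N) =>
        (C * (-β) * 2) * (μ + ‖z‖ ^ 2) ^ (-β - 1) := funext fun z => by rw [hcdef]; ring
    rw [he]
    convert h using 2
  have hcoord : HasFDerivAt (fun y : EuclideanSpace ℝ (Fin N) => (y j : ℝ))
      (EuclideanSpace.proj (𝕜 := ℝ) (ι := Fin N) j) x :=
    (EuclideanSpace.proj (𝕜 := ℝ) (ι := Fin N) j).hasFDerivAt
  have hC := hc'.mul hcoord
  rw [hA, hB, show (fun y : EuclideanSpace ℝ (Fin N) => c y * y j) = (c * fun y => y j) from rfl,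
    hC.fderiv]
  simp only [ContinuousLinearMap.add_apply, ContinuousLinearMap.smul_apply, smul_eq_mul,
    ContinuousLinearMap.coe_smul', Pi.smul_apply, innerSL_apply_apply]
  rw [EuclideanSpace.inner_single_right]
  have hproj : (EuclideanSpace.proj (𝕜 := ℝ) (ι := Fin N) j) (EuclideanSpace.single i 1)
      = if i = j then (1:ℝ) else 0 := by
    simp [EuclideanSpace.single_apply, eq_comm]
  rw [hproj]
  by_cases h : i = j <;> simp [h] <;> ring

end AuxLemmas

theorem statement7 (N k : ℕ) (hk2 : 2 < k) (hkN : k < N) (p : ℝ)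
    (hp : (k : ℝ) / ((k : ℝ) - 2) < p) (μ : ℝ) (hμ : 0 < μ)
    (β : ℝ) (hβ1 : 1 / (p - 1) ≤ β) (hβ2 : β < ((k : ℝ) - 2) / 2) :
    let C : ℝ := μ ^ (β - 1 / (p - 1)) * (2 * β * ((k : ℝ) - 2 - 2 * β)) ^ (1 / (p - 1))
    let u : EuclideanSpace ℝ (Fin N) → ℝ := fun x => C * (μ + ‖x‖ ^ 2) ^ (-β)
    ContDiff ℝ 2 u ∧ (∀ x, 0 < u x) ∧
      ∀ x, Pplus k (hessianMatrix u x) + u x ^ p ≤ 0 := by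
  intro C u
  have hk2' : (2:ℝ) < (k:ℝ) := by exact_mod_cast hk2
  have hp1 : 1 < p := by
    have h1 : (1:ℝ) < (k:ℝ) / ((k:ℝ) - 2) := by
      rw [lt_div_iff₀ (by linarith)]; linarith
    linarith
  have hpm : 0 < p - 1 := by linarith
  have hβpos : 0 < β := lt_of_lt_of_le (by positivity) hβ1
  have hk2β : 0 < (k:ℝ) - 2 - 2 * β := by
    have := hβ2; rw [lt_div_iff₀ (by norm_num : (0:ℝ) < 2)] at this; linarith
  have hD : 0 < 2 * β * ((k:ℝ) - 2 - 2 * β) := by positivity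
  have hCpos : 0 < C :=
    mul_pos (Real.rpow_pos_of_pos hμ _) (Real.rpow_pos_of_pos hD _)
  refine ⟨contdiff_u C β μ hμ, fun x => ?_, fun x => ?_⟩
  · exact mul_pos hCpos (Real.rpow_pos_of_pos (by positivity) _)
  · -- main inequality
    set r : ℝ := ‖x‖ ^ 2 with hr
    have hr0 : 0 ≤ r := by positivity
    set q : ℝ := μ + r with hqdef
    have hq : 0 < q := by positivity
    set a : ℝ := C * (-β) * q ^ (-β - 1) * 2 with ha
    set b : ℝ := C * (-β) * (-β - 1) * q ^ (-β - 1 - 1) * 4 with hb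
    have hbnn : 0 ≤ b := by
      rw [hb]
      have : C * (-β) * (-β - 1) = C * (β * (β + 1)) := by ring
      rw [this]
      positivity
    have hAe : ∀ i j, hessianMatrix u x i j
        = (a * if i = j then 1 else 0) + b * (x i * x j) := by
      intro i j
      exact hessian_entry C β μ hμ x i j
    have hsum : ∑ i, x i * x i = r := by
      rw [hr, EuclideanSpace.norm_sq_eq]; simp [sq]
    have hkey : Pplus k (hessianMatrix u x) ≤ k * a + b * r := by
      have := pplus_le (le_of_lt hkN) a b hbnn (fun i => x i) hAe
      rwa [hsum] at this
    -- now estimate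
    have hq1 : q ^ (-β - 1 - 1) * q = q ^ (-β - 1) := by
      nth_rewrite 2 [← Real.rpow_one q]
      rw [← Real.rpow_add hq]; ring_nf
    have hstep1 : k * a + b * r ≤ -(2 * β * ((k:ℝ) - 2 - 2 * β)) * C * q ^ (-β - 1) := by
      have hbr : b * r ≤ b * q := by
        apply mul_le_mul_of_nonneg_left _ hbnn
        rw [hqdef]; linarith
      have hbq : b * q = C * (β * (β + 1)) * 4 * q ^ (-β - 1) := by
        rw [hb, mul_assoc (C * (-β) * (-β - 1) * q ^ (-β - 1 - 1)) 4 q]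
        rw [show C * (-β) * (-β - 1) * q ^ (-β - 1 - 1) * (4 * q)
            = C * (-β) * (-β - 1) * 4 * (q ^ (-β - 1 - 1) * q) by ring, hq1]
        ring
      have : k * a = -2 * (k:ℝ) * β * C * q ^ (-β - 1) := by rw [ha]; ring
      calc k * a + b * r ≤ k * a + b * q := by linarith
        _ = -(2 * β * ((k:ℝ) - 2 - 2 * β)) * C * q ^ (-β - 1) := by
            rw [this, hbq]; ring
    have hup : u x ^ p ≤ 2 * β * ((k:ℝ) - 2 - 2 * β) * C * q ^ (-β - 1) := by
      set D : ℝ := 2 * β * ((k:ℝ) - 2 - 2 * β) with hDdef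
      have huxp : u x ^ p = C ^ p * q ^ (-β * p) := by
        show (C * q ^ (-β)) ^ p = _
        rw [Real.mul_rpow hCpos.le (Real.rpow_nonneg hq.le _),
          ← Real.rpow_mul hq.le]
      have hCp : C ^ p = μ ^ (β * (p - 1) - 1) * D * C := by
        have h1 : C ^ p = C ^ (p - 1) * C := by
          rw [show p = (p - 1) + 1 by ring, Real.rpow_add hCpos, Real.rpow_one]
          ring_nf
        have h2 : C ^ (p - 1) = μ ^ (β * (p - 1) - 1) * D := by
          show (μ ^ (β - 1 / (p - 1)) * D ^ (1 / (p - 1))) ^ (p - 1) = _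
          rw [Real.mul_rpow (Real.rpow_nonneg hμ.le _) (Real.rpow_nonneg hD.le _),
            ← Real.rpow_mul hμ.le, ← Real.rpow_mul hD.le]
          congr 1
          · rw [show (β - 1 / (p - 1)) * (p - 1) = β * (p - 1) - 1 by field_simp <;> ring]
          · rw [show 1 / (p - 1) * (p - 1) = 1 by field_simp, Real.rpow_one]
        rw [h1, h2]
      have he : 0 ≤ β * (p - 1) - 1 := by
        have h := mul_le_mul_of_nonneg_right hβ1 hpm.le
        rw [one_div, inv_mul_cancel₀ hpm.ne'] at h
        linarith
      have hμq : μ ^ (β * (p - 1) - 1) ≤ q ^ (β * (p - 1) - 1) :=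
        Real.rpow_le_rpow hμ.le (by rw [hqdef]; linarith) he
      have hqsplit : q ^ (β * (p - 1) - 1) * q ^ (-β * p) = q ^ (-β - 1) := by
        rw [← Real.rpow_add hq]; congr 1; ring
      calc u x ^ p = μ ^ (β * (p - 1) - 1) * D * C * q ^ (-β * p) := by rw [huxp, hCp]
        _ ≤ q ^ (β * (p - 1) - 1) * D * C * q ^ (-β * p) := by
            apply mul_le_mul_of_nonneg_right _ (Real.rpow_nonneg hq.le _)
            apply mul_le_mul_of_nonneg_right _ hCpos.le
            exact mul_le_mul_of_nonneg_right hμq hD.le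
        _ = D * C * (q ^ (β * (p - 1) - 1) * q ^ (-β * p)) := by ring
        _ = 2 * β * ((k:ℝ) - 2 - 2 * β) * C * q ^ (-β - 1) := by rw [hqsplit, hDdef]
    linarith [hkey, hstep1, hup]
end
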